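/- Let Δ ≥ 2, let G be a connected infinite Δ-regular graph, and let 0 < q ≤ 1/2 and r > 0. Suppose (S_AB, S_B) is a blocking structure for (G, q, r) with S_AB ≠ ∅ and S_B ≠ V(G). Then 2q + Δr > 1, q > 1/(Δ+1), and r < q. -/

import Mathlib

namespace Contagion

open scoped BigOperators

/-- The three strategies in the contagion game. -/
inductive Strat
  | A | B | AB
deriving DecidableEq

/-- Pairwise payoff to a player using the first strategy against a neighbor
using the second strategy, in the contagion game with parameters `q, r`. -/
noncomputable def pairPayoff (q r : ℝ) : Strat → Strat → ℝ
  | .A, .A => 1 - q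
  | .A, .B => 0
  | .A, .AB => 1 - q
  | .B, .A => 0
  | .B, .B => q
  | .B, .AB => q
  | .AB, .A => 1 - q - r
  | .AB, .B => q - r
  | .AB, .AB => max q (1 - q) - r

variable {V : Type*}

/-- Total payoff to vertex `v` for playing strategy `s` against profile `σ`. -/
noncomputable def totalPayoff (G : SimpleGraph V) (q r : ℝ) (σ : V → Strat)
    (v : V) (s : Strat) : ℝ :=
  ∑ᶠ u ∈ G.neighborSet v, pairPayoff q r s (σ u)

/-- `s` is a best response of vertex `v` to the profile `σ`. -/
def IsBestResponse (G : SimpleGraph V) (q r : ℝ) (σ : V → Strat) (v : V) (s : Strat) : Prop :=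
  ∀ s' : Strat, totalPayoff G q r σ v s' ≤ totalPayoff G q r σ v s

/-- Strategy `A` becomes epidemic in the contagion game `(G, q, r)`:
there are a finite initial set `S₀` (playing `A`, everybody else playing `B`) and a
sequence `α` of vertices in which every vertex appears at least once, such that updating
at step `n` the vertex `α n` to a best response makes every vertex eventually adopt `A`. -/
def Epidemic (G : SimpleGraph V) (q r : ℝ) : Prop :=
  ∃ (S₀ : Set V) (α : ℕ → V) (σ : ℕ → V → Strat),
    S₀.Finite ∧
    Function.Surjective α ∧
    (∀ v ∈ S₀, σ 0 v = Strat.A) ∧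
    (∀ v ∉ S₀, σ 0 v = Strat.B) ∧
    (∀ n, IsBestResponse G q r (σ n) (α n) (σ (n + 1) (α n))) ∧
    (∀ n v, v ≠ α n → σ (n + 1) v = σ n v) ∧
    (∀ v, ∃ n, σ n v = Strat.A)

/-- The epidemic region `Ω_G ⊆ ℝ²` of `G`. -/
def epidemicRegion (G : SimpleGraph V) : Set (ℝ × ℝ) :=
  {p | 0 < p.1 ∧ p.1 < 1 ∧ 0 < p.2 ∧ Epidemic G p.1 p.2}

/-- `G` is `Δ`-regular: every vertex has exactly `Δ` neighbors. -/
def IsRegular (G : SimpleGraph V) (Δ : ℕ) : Prop :=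
  ∀ v, (G.neighborSet v).ncard = Δ

/-- The number of neighbors of `v` lying in the set `S`. -/
noncomputable def degIn (G : SimpleGraph V) (v : V) (S : Set V) : ℕ :=
  (G.neighborSet v ∩ S).ncard

/-- `RT Δ`: the infinite rooted tree in which the root (the empty list) has `Δ - 1`
children and every other vertex also has `Δ - 1` children (hence degree `Δ`). -/
def RT (Δ : ℕ) : SimpleGraph (List (Fin (Δ - 1))) :=
  SimpleGraph.fromRel (fun l l' => ∃ a : Fin (Δ - 1), l' = a :: l)

/-- `G` contains a subgraph isomorphic to `RT Δ`. -/
def HasRTCopy (Δ : ℕ) (G : SimpleGraph V) : Prop :=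
  ∃ f : List (Fin (Δ - 1)) → V,
    Function.Injective f ∧ ∀ x y, (RT Δ).Adj x y → G.Adj (f x) (f y)

/-- The thick half line `HL_Δ` (for even `Δ`), columns indexed by `ℕ` starting with the
first column `0`; `(k, i)` and `(l, j)` are adjacent exactly when `|k - l| = 1`. -/
def HL (Δ : ℕ) : SimpleGraph (ℕ × Fin (Δ / 2)) :=
  SimpleGraph.fromRel (fun x y => y.1 = x.1 + 1)

/-- The epidemic region of the infinite `Δ`-regular tree:
`{(q,r) : q,r > 0, r ≥ ((Δ-1)/Δ)q, q ≤ 1/Δ} ∪ {(q,r) : q,r > 0, 2q + Δr ≤ 1}`. -/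
def treeRegion (Δ : ℕ) : Set (ℝ × ℝ) :=
  {p | 0 < p.1 ∧ 0 < p.2 ∧ ((Δ : ℝ) - 1) / Δ * p.1 ≤ p.2 ∧ p.1 ≤ 1 / Δ} ∪
  {p | 0 < p.1 ∧ 0 < p.2 ∧ 2 * p.1 + Δ * p.2 ≤ 1}

/-- The epidemic region of the thick line `L_Δ`:
`{(q,r) : 0 < q ≤ 1/2, r ≥ q/2} ∪ {(q,r) : q,r > 0, r ≤ q/2, 2q + 2r ≤ 1}`. -/
def thickLineRegion : Set (ℝ × ℝ) :=
  {p | 0 < p.1 ∧ p.1 ≤ 1 / 2 ∧ p.1 / 2 ≤ p.2} ∪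
  {p | 0 < p.1 ∧ 0 < p.2 ∧ p.2 ≤ p.1 / 2 ∧ 2 * p.1 + 2 * p.2 ≤ 1}

/-- `(SAB, SB)` is a blocking structure for the contagion game `(G, q, r)`
on a `Δ`-regular graph `G`. -/
def IsBlockingStructure (G : SimpleGraph V) (Δ : ℕ) (q r : ℝ) (SAB SB : Set V) : Prop :=
  Disjoint SAB SB ∧ (SAB.Nonempty ∨ SB.Nonempty) ∧
  (∀ v ∈ SAB, r / q * Δ < (degIn G v SB : ℝ)) ∧
  ∀ v ∈ SB,
    (1 - q - r) * Δ < (1 - q) * (degIn G v SB : ℝ) + min q (1 - q) * (degIn G v SAB : ℝ) ∧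
    (1 - q) * Δ < (degIn G v SB : ℝ) + q * (degIn G v SAB : ℝ)

/-- The two strategies of the `A`-`B` coordination game. -/
inductive CStrat
  | A | B
deriving DecidableEq

/-- Pairwise payoff in the `A`-`B` coordination game `(G, q)`. -/
noncomputable def cPairPayoff (q : ℝ) : CStrat → CStrat → ℝ
  | .A, .A => 1 - q
  | .A, .B => 0
  | .B, .A => 0
  | .B, .B => q

/-- Total payoff to `v` for playing `s` against profile `σ` in the coordination game. -/
noncomputable def cTotalPayoff (G : SimpleGraph V) (q : ℝ) (σ : V → CStrat)
    (v : V) (s : CStrat) : ℝ :=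
  ∑ᶠ u ∈ G.neighborSet v, cPairPayoff q s (σ u)

/-- `s` is a best response of `v` to `σ` in the coordination game. -/
def CIsBestResponse (G : SimpleGraph V) (q : ℝ) (σ : V → CStrat) (v : V) (s : CStrat) : Prop :=
  ∀ s' : CStrat, cTotalPayoff G q σ v s' ≤ cTotalPayoff G q σ v s

/-- Strategy `A` becomes epidemic in the coordination game `(G, q)` starting from the
initial set `S₀`. -/
def CoordEpidemicFrom (G : SimpleGraph V) (q : ℝ) (S₀ : Set V) : Prop :=
  ∃ (α : ℕ → V) (σ : ℕ → V → CStrat),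
    Function.Surjective α ∧
    (∀ v ∈ S₀, σ 0 v = CStrat.A) ∧
    (∀ v ∉ S₀, σ 0 v = CStrat.B) ∧
    (∀ n, CIsBestResponse G q (σ n) (α n) (σ (n + 1) (α n))) ∧
    (∀ n v, v ≠ α n → σ (n + 1) v = σ n v) ∧
    (∀ v, ∃ n, σ n v = CStrat.A)

/-- Strategy `A` becomes epidemic in the coordination game `(G, q)`. -/
def CoordEpidemic (G : SimpleGraph V) (q : ℝ) : Prop :=
  ∃ S₀ : Set V, S₀.Finite ∧ CoordEpidemicFrom G q S₀

/-- If `(S_AB, S_B)` is a blocking structure for `(G, q, r)` on a connected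
infinite `Δ`-regular graph with `0 < q ≤ 1/2`, `r > 0`, `S_AB ≠ ∅` and `S_B ≠ V(G)`,
then `2q + Δr > 1`, `q > 1/(Δ+1)` and `r < q`. -/
theorem blocking_nonempty_SAB_constraints {V : Type*} (Δ : ℕ) (hΔ : 2 ≤ Δ)
    (G : SimpleGraph V) (hInf : Infinite V) (hConn : G.Connected) (hReg : IsRegular G Δ)
    (q r : ℝ) (hq0 : 0 < q) (hq : q ≤ 1 / 2) (hr : 0 < r)
    (SAB SB : Set V) (hblock : IsBlockingStructure G Δ q r SAB SB)
    (hSAB : SAB.Nonempty) (hSB : SB ≠ Set.univ) :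
    1 < 2 * q + Δ * r ∧ 1 / ((Δ : ℝ) + 1) < q ∧ r < q := by
  obtain ⟨hdisj, -, hAB, hB⟩ := hblock
  have hΔR : (2:ℝ) ≤ (Δ:ℝ) := by exact_mod_cast hΔ
  have hNfin : ∀ v : V, (G.neighborSet v).Finite := by
    intro v
    apply Set.finite_of_ncard_ne_zero
    rw [hReg v]; omega
  have hdegle : ∀ (v : V) (S : Set V), degIn G v S ≤ Δ := by
    intro v S
    rw [← hReg v]
    exact Set.ncard_le_ncard Set.inter_subset_left (hNfin v)
  obtain ⟨v0, hv0⟩ := hSAB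
  have h1 := hAB v0 hv0
  -- r < q
  have hrq : r < q := by
    have h2 : (degIn G v0 SB : ℝ) ≤ Δ := by exact_mod_cast hdegle v0 SB
    have : r / q * Δ < Δ := lt_of_lt_of_le h1 h2
    have hdiv : r / q < 1 := by
      by_contra hc
      push_neg at hc
      nlinarith
    rw [div_lt_one hq0] at hdiv
    exact hdiv
  -- SB is nonempty
  have hSBne : SB.Nonempty := by
    have hpos : (0:ℝ) < r / q * Δ := by positivity
    have : degIn G v0 SB ≠ 0 := by
      intro h0
      rw [h0] at h1
      push_cast at h1
      linarith
    obtain ⟨w, hw⟩ := Set.nonempty_of_ncard_ne_zero this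
    exact ⟨w, hw.2⟩
  -- there is a vertex of SB with a neighbor outside SB
  have hbdry : ∃ v ∈ SB, ∃ w, G.Adj v w ∧ w ∉ SB := by
    by_contra hc
    push_neg at hc
    apply hSB
    obtain ⟨w0, hw0⟩ := hSBne
    have key : ∀ {x y : V} (p : G.Walk x y), x ∈ SB → y ∈ SB := by
      intro x y p
      induction p with
      | nil => exact id
      | cons hadj p ih => intro hx; exact ih (hc _ hx _ hadj)
    apply Set.eq_univ_iff_forall.2
    intro u
    obtain ⟨p⟩ := hConn.preconnected w0 u
    exact key p hw0
  obtain ⟨v, hv, w, hvw, hwB⟩ := hbdry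
  have hw' : w ∈ G.neighborSet v := hvw
  have hb0 : (0:ℝ) ≤ (degIn G v SAB : ℝ) := by positivity
  have hsum : (degIn G v SB : ℝ) + (degIn G v SAB : ℝ) ≤ (Δ:ℝ) := by
    have hnat : degIn G v SB + degIn G v SAB ≤ Δ := by
      rw [degIn, degIn, ← Set.ncard_union_eq
        (Disjoint.mono Set.inter_subset_right Set.inter_subset_right hdisj.symm)
        ((hNfin v).inter_of_left _) ((hNfin v).inter_of_left _)]
      rw [← hReg v]
      exact Set.ncard_le_ncard (by intro x hx; rcases hx with h | h <;> exact h.1) (hNfin v)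
    exact_mod_cast hnat
  have hlt : (degIn G v SB : ℝ) + 1 ≤ (Δ:ℝ) := by
    have hsub : G.neighborSet v ∩ SB ⊆ G.neighborSet v \ {w} := by
      intro x hx
      exact ⟨hx.1, by rintro rfl; exact hwB hx.2⟩
    have hnat : degIn G v SB ≤ Δ - 1 := by
      have := Set.ncard_le_ncard hsub (hNfin v).diff
      rwa [Set.ncard_diff_singleton_of_mem hw', hReg v] at this
    have : degIn G v SB + 1 ≤ Δ := by omega
    exact_mod_cast this
  obtain ⟨hB1, hB2⟩ := hB v hv
  rw [min_eq_left (by linarith : q ≤ 1 - q)] at hB1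
  set a : ℝ := (degIn G v SB : ℝ)
  set b : ℝ := (degIn G v SAB : ℝ)
  refine ⟨?_, ?_, hrq⟩
  · nlinarith [mul_le_mul_of_nonneg_left hsum hq0.le,
      mul_nonneg (by linarith : (0:ℝ) ≤ 1 - 2*q) (by linarith : (0:ℝ) ≤ (Δ:ℝ) - 1 - a)]
  · rw [div_lt_iff₀ (by linarith : (0:ℝ) < (Δ:ℝ) + 1)]
    nlinarith [mul_le_mul_of_nonneg_left hsum hq0.le,
      mul_nonneg (by linarith : (0:ℝ) ≤ 1 - q) (by linarith : (0:ℝ) ≤ (Δ:ℝ) - 1 - a)]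


end Contagion
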